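/- The high-type fraction of the low-price optimal segment, μ¹_2(k) = (e^{1/k}−1)/(e^{ω/k}−1), is strictly increasing in k on (0,∞) for fixed ω > 1. -/

import Mathlib

open Real Set

lemma aux1 : StrictAntiOn (fun t : ℝ => (1 - Real.exp (-t)) / t) (Set.Ioi 0) := by
  apply strictAntiOn_of_deriv_neg (convex_Ioi 0)
  · apply ContinuousOn.div ((by fun_prop : Continuous fun t : ℝ => 1 - Real.exp (-t)).continuousOn) continuousOn_id
    intro t ht; exact ne_of_gt (Set.mem_Ioi.mp ht)
  · intro t ht
    rw [interior_Ioi] at ht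
    have ht0 : (0:ℝ) < t := ht
    have hd : HasDerivAt (fun t : ℝ => (1 - Real.exp (-t)) / t)
        ((Real.exp (-t) * t - (1 - Real.exp (-t)) * 1) / t ^ 2) t := by
      have h1 : HasDerivAt (fun t : ℝ => 1 - Real.exp (-t)) (Real.exp (-t)) t := by
        have h2 := (Real.hasDerivAt_exp (-t)).comp t (hasDerivAt_neg t)
        simpa [Function.comp_def] using h2.const_sub 1
      exact h1.div (hasDerivAt_id t) (ne_of_gt ht0)
    rw [hd.deriv]
    apply div_neg_of_neg_of_pos
    · have h3 := Real.add_one_lt_exp (ne_of_gt ht0)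
      have he : Real.exp (-t) * Real.exp t = 1 := by rw [← Real.exp_add]; simp
      nlinarith [Real.exp_pos (-t), Real.exp_pos t]
    · positivity

lemma aux2 {ω x : ℝ} (hω : 1 < ω) (hx : 0 < x) :
    1 - Real.exp (-(ω * x)) < ω * (1 - Real.exp (-x)) := by
  have hωx : 0 < ω * x := by nlinarith
  have h := aux1 (Set.mem_Ioi.mpr hx) (Set.mem_Ioi.mpr hωx) (by nlinarith)
  rw [div_lt_div_iff₀ hωx hx] at h
  nlinarith

lemma aux3 {ω : ℝ} (hω : 1 < ω) :
    StrictAntiOn (fun u : ℝ => (Real.exp u - 1) / (Real.exp (ω * u) - 1))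
      (Set.Ioi 0) := by
  have hB : ∀ u : ℝ, 0 < u → 1 < Real.exp (ω * u) := by
    intro u hu
    have := Real.add_one_lt_exp (ne_of_gt (show (0:ℝ) < ω * u by nlinarith))
    nlinarith
  apply strictAntiOn_of_deriv_neg (convex_Ioi 0)
  · apply ContinuousOn.div ((by fun_prop : Continuous fun u : ℝ => Real.exp u - 1).continuousOn) ((by fun_prop : Continuous fun u : ℝ => Real.exp (ω * u) - 1).continuousOn)
    intro u hu
    have := hB u (Set.mem_Ioi.mp hu)
    linarith
  · intro u hu
    rw [interior_Ioi] at hu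
    have hu0 : (0:ℝ) < u := hu
    have hBu := hB u hu0
    have hd : HasDerivAt (fun u : ℝ => (Real.exp u - 1) / (Real.exp (ω * u) - 1))
        ((Real.exp u * (Real.exp (ω * u) - 1) -
          (Real.exp u - 1) * (ω * Real.exp (ω * u))) / (Real.exp (ω * u) - 1) ^ 2) u := by
      have h1 : HasDerivAt (fun u : ℝ => Real.exp u - 1) (Real.exp u) u := by
        simpa using (Real.hasDerivAt_exp u).sub_const 1
      have h2 : HasDerivAt (fun u : ℝ => Real.exp (ω * u) - 1) (ω * Real.exp (ω * u)) u := by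
        have h3 := (Real.hasDerivAt_exp (ω * u)).comp u ((hasDerivAt_id u).const_mul ω)
        simpa [mul_comm] using h3.sub_const 1
      exact h1.div h2 (by linarith)
    rw [hd.deriv]
    apply div_neg_of_neg_of_pos _ (pow_pos (by linarith) 2)
    have key := aux2 hω hu0
    have k2 : (1 - Real.exp (-(ω * u))) * (Real.exp u * Real.exp (ω * u)) <
        ω * (1 - Real.exp (-u)) * (Real.exp u * Real.exp (ω * u)) := by
      apply mul_lt_mul_of_pos_right key (by positivity)
    have e1 : Real.exp (-(ω * u)) * Real.exp (ω * u) * Real.exp u = Real.exp u := by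
      rw [← Real.exp_add]; simp
    have e2 : Real.exp (-u) * Real.exp u * Real.exp (ω * u) = Real.exp (ω * u) := by
      rw [← Real.exp_add]; simp
    nlinarith [k2, e1, e2]

theorem stmt_15 (ω : ℝ) (hω : 1 < ω) :
    StrictMonoOn (fun k : ℝ => (Real.exp (1 / k) - 1) / (Real.exp (ω / k) - 1))
      (Set.Ioi (0:ℝ)) := by
  intro a ha b hb hab
  have ha0 : (0:ℝ) < a := ha
  have hb0 : (0:ℝ) < b := hb
  have h1 : (0:ℝ) < 1 / b := by positivity
  have h2 : 1 / b < 1 / a := one_div_lt_one_div_of_lt ha0 hab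
  have h3 := aux3 hω (Set.mem_Ioi.mpr h1) (Set.mem_Ioi.mpr (lt_trans h1 h2)) h2
  simpa [mul_one_div, div_eq_mul_inv] using h3
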